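/- arXiv:0911.4638 — 2 statements merged into one kernel-verified Lean document; each statement's English description precedes it below -/
import Mathlib

section
/- Let A be an n×n real matrix with n ≥ 1. Then for any vectors x, y ∈ ℝ^n, |⟨(Adj A) x, y⟩| ≤ ‖x‖ ‖y‖ ‖A‖_{HS}^{n−1} (n−1)^{−(n−1)/2}, where Adj A is the adjugate (classical adjoint) of A and ‖·‖_{HS} is the Hilbert–Schmidt (Frobenius) norm. -/
open Matrix Finset

/-- The Hilbert–Schmidt (Frobenius) norm of a matrix. -/
noncomputable def hsNorm {n : ℕ} (A : Matrix (Fin n) (Fin n) ℝ) : ℝ :=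
  Real.sqrt (∑ i, ∑ j, A i j ^ 2)

/-- AM–GM: the product of nonnegative reals is at most the `card`-th power of their average. -/
private lemma amgm_prod_le {α : Type*} (s : Finset α) (z : α → ℝ)
    (hz : ∀ i ∈ s, 0 ≤ z i) :
    ∏ i ∈ s, z i ≤ ((∑ i ∈ s, z i) / s.card) ^ s.card := by
  rcases Nat.eq_zero_or_pos s.card with h | h
  · rw [Finset.card_eq_zero.mp h]; simp
  · have hm : (0:ℝ) < s.card := by exact_mod_cast h
    have hw : ∑ _i ∈ s, (1/(s.card:ℝ)) = 1 := by
      rw [Finset.sum_const, nsmul_eq_mul]; field_simp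
    have h1 := Real.geom_mean_le_arith_mean_weighted s (fun _ => 1/(s.card:ℝ)) z
      (fun i _ => by positivity) hw hz
    have hprod : (0:ℝ) ≤ ∏ i ∈ s, z i := Finset.prod_nonneg hz
    have h2 : (∏ i ∈ s, z i) ^ ((1:ℝ)/s.card) ≤ (∑ i ∈ s, z i) / s.card := by
      rw [← Real.finset_prod_rpow s z hz]
      refine h1.trans_eq ?_
      rw [← Finset.mul_sum, one_div, inv_mul_eq_div]
    calc ∏ i ∈ s, z i
        = ((∏ i ∈ s, z i) ^ ((1:ℝ)/s.card)) ^ (s.card : ℕ) := by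
          rw [← Real.rpow_natCast ((∏ i ∈ s, z i) ^ ((1:ℝ)/(s.card:ℝ))), ← Real.rpow_mul hprod,
            one_div, inv_mul_cancel₀ (ne_of_gt hm), Real.rpow_one]
      _ ≤ ((∑ i ∈ s, z i) / s.card) ^ (s.card : ℕ) :=
          pow_le_pow_left₀ (Real.rpow_nonneg hprod _) h2 _

private lemma quad_adj_bound {n : ℕ} {M : Matrix (Fin n) (Fin n) ℝ} (hM : M.PosSemidef)
    (x : Fin n → ℝ) :
    x ⬝ᵥ (M.adjugate *ᵥ x) ≤ (∑ i, x i ^ 2) * (M.trace / ((n - 1 : ℕ) : ℝ)) ^ (n - 1) := by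
  have hH : M.IsHermitian := hM.isHermitian
  set U : Matrix (Fin n) (Fin n) ℝ := (hH.eigenvectorUnitary : Matrix (Fin n) (Fin n) ℝ) with hU
  set μ : Fin n → ℝ := hH.eigenvalues with hμdef
  have hμ : ∀ i, 0 ≤ μ i := hM.eigenvalues_nonneg
  have hUU : U * star U = 1 := Unitary.coe_mul_star_self _
  have hUU' : star U * U = 1 := Unitary.coe_star_mul_self _
  have hofReal : (RCLike.ofReal ∘ μ : Fin n → ℝ) = μ := by funext i; simp
  have hspec : M = U * Matrix.diagonal μ * star U := by
    have := hH.spectral_theorem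
    rwa [hofReal] at this
  -- trace = sum of eigenvalues
  have htr : M.trace = ∑ i, μ i := by
    conv_lhs => rw [hspec]
    rw [Matrix.trace_mul_cycle, hUU', Matrix.one_mul, Matrix.trace_diagonal]
  -- adjugate of invertible matrices
  have adj_inv : ∀ (B : Matrix (Fin n) (Fin n) ℝ), IsUnit B.det →
      Matrix.adjugate B = B.det • B⁻¹ := by
    intro B hB
    calc Matrix.adjugate B = B⁻¹ * (B * Matrix.adjugate B) := by
          rw [← Matrix.mul_assoc, Matrix.nonsing_inv_mul B hB, Matrix.one_mul]
      _ = B.det • B⁻¹ := by rw [Matrix.mul_adjugate, Matrix.mul_smul, Matrix.mul_one]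
  have hdet1 : (star U).det * U.det = 1 := by
    rw [← Matrix.det_mul, hUU', Matrix.det_one]
  have hUdet : IsUnit U.det := IsUnit.of_mul_eq_one _ (by rw [mul_comm] at hdet1; exact hdet1)
  have hsUdet : IsUnit (star U).det := IsUnit.of_mul_eq_one _ hdet1
  have hUinv : U⁻¹ = star U := Matrix.inv_eq_right_inv hUU
  have hsUinv : (star U)⁻¹ = U := Matrix.inv_eq_right_inv hUU'
  set p : Fin n → ℝ := fun i => ∏ j ∈ Finset.univ.erase i, μ j with hp
  have hadjM : Matrix.adjugate M = U * Matrix.diagonal p * star U := by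
    conv_lhs => rw [hspec]
    rw [Matrix.adjugate_mul_distrib, Matrix.adjugate_mul_distrib, Matrix.adjugate_diagonal,
      adj_inv _ hUdet, adj_inv _ hsUdet, hUinv, hsUinv]
    simp only [Matrix.smul_mul, Matrix.mul_smul, smul_smul, ← Matrix.mul_assoc]
    rw [mul_comm U.det, hdet1, one_smul]
  -- the coordinates of x in the eigenbasis
  set c : Fin n → ℝ := Uᵀ *ᵥ x with hc
  have hcvm : c = x ᵥ* U := by rw [hc, ← Matrix.vecMul_transpose, Matrix.transpose_transpose]
  have hstarU : star U = Uᵀ := by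
    rw [Matrix.star_eq_conjTranspose]; ext i j; simp [Matrix.conjTranspose_apply]
  have hquad : x ⬝ᵥ (Matrix.adjugate M *ᵥ x) = ∑ i, p i * c i ^ 2 := by
    rw [hadjM, ← Matrix.mulVec_mulVec, ← Matrix.mulVec_mulVec, hstarU,
      Matrix.dotProduct_mulVec, ← hcvm]
    simp [Matrix.mulVec_diagonal, dotProduct, hc]
    exact Finset.sum_congr rfl fun i _ => by ring
  have hnorm : ∑ i, c i ^ 2 = ∑ i, x i ^ 2 := by
    have : ∑ i, c i ^ 2 = c ⬝ᵥ c := by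
      simp [dotProduct]; exact Finset.sum_congr rfl fun i _ => by ring
    rw [this]
    nth_rewrite 1 [hcvm]
    rw [← Matrix.dotProduct_mulVec, hc, Matrix.mulVec_mulVec, ← hstarU, hUU, Matrix.one_mulVec]
    simp [dotProduct]; exact Finset.sum_congr rfl fun i _ => by ring
  set K : ℝ := (M.trace / ((n - 1 : ℕ) : ℝ)) ^ (n - 1) with hK
  have hKnonneg : 0 ≤ K := by
    apply pow_nonneg
    apply div_nonneg _ (by positivity)
    rw [htr]; exact Finset.sum_nonneg fun i _ => hμ i
  have hpK : ∀ i : Fin n, p i ≤ K := by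
    intro i
    have hcard : (Finset.univ.erase i).card = n - 1 := by
      rw [Finset.card_erase_of_mem (Finset.mem_univ i), Finset.card_univ, Fintype.card_fin]
    have h1 : p i ≤ ((∑ j ∈ Finset.univ.erase i, μ j) / ((n - 1 : ℕ) : ℝ)) ^ (n - 1) := by
      have := amgm_prod_le (Finset.univ.erase i) μ (fun j _ => hμ j)
      rwa [hcard] at this
    refine h1.trans ?_
    apply pow_le_pow_left₀ (div_nonneg (Finset.sum_nonneg fun j _ => hμ j) (by positivity))
    rw [htr]
    apply div_le_div_of_nonneg_right ?_ (by positivity)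
    exact Finset.sum_le_sum_of_subset_of_nonneg (Finset.subset_univ _) (fun j _ _ => hμ j)
  calc x ⬝ᵥ (Matrix.adjugate M *ᵥ x) = ∑ i, p i * c i ^ 2 := hquad
    _ ≤ ∑ i, K * c i ^ 2 :=
        Finset.sum_le_sum fun i _ => mul_le_mul_of_nonneg_right (hpK i) (sq_nonneg _)
    _ = K * ∑ i, c i ^ 2 := by rw [← Finset.mul_sum]
    _ = (∑ i, x i ^ 2) * K := by rw [hnorm, mul_comm]

/-- For an `n×n` real matrix `A` with `n ≥ 1` and vectors `x, y ∈ ℝⁿ`,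
`|⟨(Adj A) x, y⟩| ≤ ‖x‖ ‖y‖ ‖A‖_HS^(n−1) (n−1)^(−(n−1)/2)`
(with the convention `0^0 = 1` for the real power when `n = 1`). -/
theorem adjugate_inner_bound {n : ℕ} (hn : 1 ≤ n) (A : Matrix (Fin n) (Fin n) ℝ)
    (x y : Fin n → ℝ) :
    |∑ i, (A.adjugate.mulVec x) i * y i| ≤
      Real.sqrt (∑ i, x i ^ 2) * Real.sqrt (∑ i, y i ^ 2) *
        hsNorm A ^ (n - 1) * ((n : ℝ) - 1) ^ (-(((n : ℝ) - 1) / 2)) := by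
  set v : Fin n → ℝ := A.adjugate *ᵥ x with hv
  set t : ℝ := ∑ i, ∑ j, A i j ^ 2 with ht
  have ht0 : 0 ≤ t := Finset.sum_nonneg fun i _ => Finset.sum_nonneg fun j _ => sq_nonneg _
  have hy0 : 0 ≤ ∑ i, y i ^ 2 := Finset.sum_nonneg fun i _ => sq_nonneg _
  have hx0 : 0 ≤ ∑ i, x i ^ 2 := Finset.sum_nonneg fun i _ => sq_nonneg _
  set m : ℕ := n - 1 with hm
  have hmr : ((n : ℝ) - 1) = (m : ℝ) := by
    rw [hm, Nat.cast_sub hn, Nat.cast_one]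
  have hm0 : (0 : ℝ) ≤ (m : ℝ) := Nat.cast_nonneg m
  have hdiv0 : (0 : ℝ) ≤ t / (m : ℝ) := div_nonneg ht0 hm0
  have hhs : hsNorm A = Real.sqrt t := rfl
  have hAt : Aᴴ = Aᵀ := by ext i j; simp [Matrix.conjTranspose_apply]
  have hMpsd : (A * Aᵀ).PosSemidef := by
    have := Matrix.posSemidef_self_mul_conjTranspose A
    rwa [hAt] at this
  have hv2 : x ⬝ᵥ (Matrix.adjugate (A * Aᵀ) *ᵥ x) = ∑ i, v i * v i := by
    rw [Matrix.adjugate_mul_distrib, ← Matrix.adjugate_transpose, ← Matrix.mulVec_mulVec,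
      Matrix.dotProduct_mulVec, Matrix.vecMul_transpose, ← hv]
    rfl
  have htrace : (A * Aᵀ).trace = t := by
    rw [ht]
    simp [Matrix.trace, Matrix.mul_apply, sq]
  have hkey : ∑ i, v i * v i ≤ (∑ i, x i ^ 2) * (t / (m : ℝ)) ^ m := by
    rw [← hv2]
    have h := quad_adj_bound hMpsd x
    rwa [htrace, ← hm] at h
  have hCS := Finset.sum_mul_sq_le_sq_mul_sq Finset.univ v y
  have habs : |∑ i, v i * y i| ≤ Real.sqrt ((∑ i, v i ^ 2) * ∑ i, y i ^ 2) := by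
    rw [← Real.sqrt_sq_eq_abs]
    exact Real.sqrt_le_sqrt hCS
  have hvv : ∑ i, v i ^ 2 = ∑ i, v i * v i := by
    exact Finset.sum_congr rfl fun i _ => sq (v i) ▸ by ring
  have hsq : Real.sqrt ((∑ i, v i ^ 2) * ∑ i, y i ^ 2)
      ≤ Real.sqrt ((∑ i, x i ^ 2) * (t / (m : ℝ)) ^ m * ∑ i, y i ^ 2) := by
    apply Real.sqrt_le_sqrt
    apply mul_le_mul_of_nonneg_right _ hy0
    rw [hvv]; exact hkey
  have hfac : Real.sqrt ((t / (m : ℝ)) ^ m) = hsNorm A ^ m * (m : ℝ) ^ (-((m : ℝ) / 2)) := by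
    rw [Real.sqrt_eq_rpow, ← Real.rpow_natCast (t / (m : ℝ)) m, ← Real.rpow_mul hdiv0,
      Real.div_rpow ht0 hm0, Real.rpow_neg hm0, div_eq_mul_inv]
    congr 1
    · rw [hhs, Real.sqrt_eq_rpow, ← Real.rpow_natCast (t ^ ((1 : ℝ) / 2)) m,
        ← Real.rpow_mul ht0]
      congr 1; ring
    · congr 1; ring
  rw [hmr]
  calc |∑ i, v i * y i|
      ≤ Real.sqrt ((∑ i, v i ^ 2) * ∑ i, y i ^ 2) := habs
    _ ≤ Real.sqrt ((∑ i, x i ^ 2) * (t / (m : ℝ)) ^ m * ∑ i, y i ^ 2) := hsq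
    _ = Real.sqrt (∑ i, x i ^ 2) * Real.sqrt ((t / (m : ℝ)) ^ m) * Real.sqrt (∑ i, y i ^ 2) := by
        rw [Real.sqrt_mul (mul_nonneg hx0 (pow_nonneg hdiv0 m)), Real.sqrt_mul hx0]
    _ = Real.sqrt (∑ i, x i ^ 2) * Real.sqrt (∑ i, y i ^ 2) *
          hsNorm A ^ m * (m : ℝ) ^ (-((m : ℝ) / 2)) := by
        rw [hfac]; ring_nf
end

section
/- Let A be an n×n real matrix with n ≥ 1. Then |trace(Adj A)| ≤ n ‖A‖_{HS}^{n−1} (n−1)^{−(n−1)/2}. -/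
open Matrix Finset

lemma sum_comp_le_sum {α β : Type*} [Fintype α] [Fintype β] [DecidableEq β]
    (g : α → β) (hg : Function.Injective g) (f : β → ℝ) (hf : ∀ b, 0 ≤ f b) :
    ∑ a, f (g a) ≤ ∑ b, f b := by
  rw [← Finset.sum_image (fun a _ b _ h => hg h)]
  exact Finset.sum_le_sum_of_subset_of_nonneg (Finset.subset_univ _) (fun b _ _ => hf b)

lemma trace_eq_sum_eig {m : ℕ} {B : Matrix (Fin m) (Fin m) ℝ} (hB : B.IsHermitian) :
    B.trace = ∑ i, hB.eigenvalues i := by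
  rw [hB.trace_eq_sum_eigenvalues]
  simp

lemma abs_det_le_hs (m : ℕ) (B : Matrix (Fin m) (Fin m) ℝ) :
    |B.det| ≤ ((∑ i, ∑ j, B i j ^ 2) / m) ^ ((m : ℝ) / 2) := by
  rcases Nat.eq_zero_or_pos m with hm | hm
  · subst hm
    simp [Matrix.det_fin_zero]
  set G := Bᴴ * B with hGdef
  have hG : G.IsHermitian := isHermitian_conjTranspose_mul_self B
  have hnn : ∀ i, 0 ≤ hG.eigenvalues i := eigenvalues_conjTranspose_mul_self_nonneg B
  have hdet : B.det ^ 2 = ∏ i, hG.eigenvalues i := by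
    have h := hG.det_eq_prod_eigenvalues
    have h2 : G.det = B.det ^ 2 := by
      rw [hGdef, Matrix.det_mul, Matrix.det_conjTranspose]; simp [sq]
    rw [h2] at h
    simpa using h
  have htr : (∑ i, ∑ j, B i j ^ 2) = ∑ i, hG.eigenvalues i := by
    rw [← trace_eq_sum_eig hG, hGdef]
    simp only [Matrix.trace, Matrix.diag, Matrix.mul_apply, Matrix.conjTranspose_apply,
      star_trivial]
    rw [Finset.sum_comm]
    simp [sq]
  set T : ℝ := ∑ i, hG.eigenvalues i with hT
  have hTnn : 0 ≤ T := Finset.sum_nonneg fun i _ => hnn i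
  -- AM-GM
  have hamgm : (∏ i, hG.eigenvalues i ^ ((1 : ℝ) / m)) ≤ T / m := by
    have h := Real.geom_mean_le_arith_mean_weighted Finset.univ
      (fun _ => (1 : ℝ) / m) hG.eigenvalues
      (fun i _ => by positivity)
      (by simp [Finset.card_univ]; field_simp)
      (fun i _ => hnn i)
    calc (∏ i, hG.eigenvalues i ^ ((1 : ℝ) / m)) ≤ ∑ i, (1 : ℝ) / m * hG.eigenvalues i := h
      _ = T / m := by rw [← Finset.mul_sum]; ring
  have hQnn : 0 ≤ ∏ i, hG.eigenvalues i ^ ((1 : ℝ) / m) :=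
    Finset.prod_nonneg fun i _ => Real.rpow_nonneg (hnn i) _
  have hPQ : (∏ i, hG.eigenvalues i ^ ((1 : ℝ) / m)) ^ (m : ℝ) = ∏ i, hG.eigenvalues i := by
    rw [← Real.finset_prod_rpow _ _ (fun i _ => Real.rpow_nonneg (hnn i) _)]
    refine Finset.prod_congr rfl fun i _ => ?_
    rw [← Real.rpow_mul (hnn i)]
    field_simp
    simp
  have hP : (∏ i, hG.eigenvalues i) ≤ (T / m) ^ (m : ℝ) := by
    rw [← hPQ]
    exact Real.rpow_le_rpow hQnn hamgm (by positivity)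
  have habs : |B.det| = Real.sqrt (∏ i, hG.eigenvalues i) := by
    rw [← hdet, Real.sqrt_sq_eq_abs]
  rw [habs, htr]
  have : Real.sqrt (∏ i, hG.eigenvalues i) ≤ Real.sqrt ((T / m) ^ (m : ℝ)) :=
    Real.sqrt_le_sqrt hP
  refine this.trans_eq ?_
  rw [Real.sqrt_eq_rpow, ← Real.rpow_mul (by positivity)]
  ring_nf

lemma rpow_aux (m : ℕ) (S : ℝ) (hS : 0 ≤ S) :
    (S / m) ^ ((m : ℝ) / 2) = Real.sqrt S ^ m * (m : ℝ) ^ (-((m : ℝ) / 2)) := by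
  rcases Nat.eq_zero_or_pos m with hm | hm
  · subst hm; simp
  have hmpos : (0 : ℝ) < m := by exact_mod_cast hm
  rw [Real.div_rpow hS hmpos.le, Real.rpow_neg hmpos.le, div_eq_mul_inv]
  congr 1
  rw [Real.sqrt_eq_rpow, ← Real.rpow_natCast (S ^ ((1:ℝ)/2)) m, ← Real.rpow_mul hS]
  ring_nf

/-- For an `n×n` real matrix `A` with `n ≥ 1`,
`|trace(Adj A)| ≤ n ‖A‖_HS^(n−1) (n−1)^(−(n−1)/2)`
(with the convention `0^0 = 1` for the real power when `n = 1`). -/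
theorem trace_adjugate_bound {n : ℕ} (hn : 1 ≤ n) (A : Matrix (Fin n) (Fin n) ℝ) :
    |Matrix.trace A.adjugate| ≤
      (n : ℝ) * hsNorm A ^ (n - 1) * ((n : ℝ) - 1) ^ (-(((n : ℝ) - 1) / 2)) := by
  obtain ⟨m, rfl⟩ : ∃ m, n = m + 1 := ⟨n - 1, (Nat.succ_pred_eq_of_pos hn).symm⟩
  set S : ℝ := ∑ i, ∑ j, A i j ^ 2 with hSdef
  have hSnn : 0 ≤ S := Finset.sum_nonneg fun i _ => Finset.sum_nonneg fun j _ => sq_nonneg _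
  have hdiag : ∀ i : Fin (m + 1), A.adjugate i i =
      (A.submatrix i.succAbove i.succAbove).det := by
    intro i
    rw [Matrix.adjugate_fin_succ_eq_det_submatrix]
    have : Even ((i : ℕ) + i) := ⟨i, rfl⟩
    rw [this.neg_one_pow, one_mul]
  have hsub : ∀ i : Fin (m + 1),
      (∑ j, ∑ k, (A.submatrix i.succAbove i.succAbove) j k ^ 2) ≤ S := by
    intro i
    calc (∑ j : Fin m, ∑ k : Fin m, A (i.succAbove j) (i.succAbove k) ^ 2)
        ≤ ∑ j : Fin m, ∑ k : Fin (m+1), A (i.succAbove j) k ^ 2 := by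
          refine Finset.sum_le_sum fun j _ => ?_
          exact sum_comp_le_sum i.succAbove (Fin.succAbove_right_injective)
            (fun k => A (i.succAbove j) k ^ 2) (fun k => sq_nonneg _)
      _ ≤ ∑ j : Fin (m+1), ∑ k : Fin (m+1), A j k ^ 2 :=
          sum_comp_le_sum i.succAbove (Fin.succAbove_right_injective)
            (fun j => ∑ k, A j k ^ 2)
            (fun j => Finset.sum_nonneg fun k _ => sq_nonneg _)
  have key : ∀ i : Fin (m + 1), |A.adjugate i i| ≤ (S / m) ^ ((m : ℝ) / 2) := by
    intro i
    rw [hdiag i]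
    refine (abs_det_le_hs m _).trans ?_
    refine Real.rpow_le_rpow (by positivity) ?_ (by positivity)
    rcases Nat.eq_zero_or_pos m with h | h
    · subst h; simp
    · have hmpos : (0 : ℝ) < m := by exact_mod_cast h
      exact div_le_div_of_nonneg_right (hsub i) hmpos.le
  have htrace : |Matrix.trace A.adjugate| ≤ (m + 1 : ℝ) * (S / m) ^ ((m : ℝ) / 2) := by
    calc |Matrix.trace A.adjugate| = |∑ i, A.adjugate i i| := by
          simp [Matrix.trace, Matrix.diag]
      _ ≤ ∑ i : Fin (m+1), |A.adjugate i i| := Finset.abs_sum_le_sum_abs _ _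
      _ ≤ ∑ _i : Fin (m+1), (S / m) ^ ((m : ℝ) / 2) := Finset.sum_le_sum fun i _ => key i
      _ = (m + 1 : ℝ) * (S / m) ^ ((m : ℝ) / 2) := by
          rw [Finset.sum_const, Finset.card_univ]
          push_cast [Fintype.card_fin]
          ring
  refine htrace.trans_eq ?_
  have h1 : ((m + 1 : ℕ) : ℝ) - 1 = (m : ℝ) := by push_cast; ring
  have h2 : (m + 1) - 1 = m := by omega
  rw [h1, h2, rpow_aux m S hSnn, hsNorm, ← hSdef]
  push_cast
  ring
end
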